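/- The explicitly defined polynomials L_0, L_1, ..., L_n satisfy the derivative recursions of the breadth-one basis: (a) ∂L_k/∂x_1 = L_{k-1} for every k ∈ {1, ..., n}; and (b) for every s ∈ {2, ..., d} and every k ∈ {0, ..., n}, ∂L_k/∂x_s = ∑_{i=2}^{k} a_{i,s} L_{k-i} (an empty sum, i.e. 0, when k ≤ 1). -/

import Mathlib

/-- The explicit breadth-one basis polynomial `L_k` (Corollary 3.4):
`L_k = ∑ (1/γ₁!) (∏_{s=2}^d ∏_{j=2}^n a_{j,s}^{γ_{s,j}}/γ_{s,j}!) x₁^{γ₁} ∏_{s=2}^d x_s^{|γ_s|}`,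
the sum being over `γ₁ ∈ ℕ` and `γ_{s,j} ∈ ℕ` with `γ₁ + ∑_{s,j} j·γ_{s,j} = k`.
Variables `x₁,…,x_d` are the coordinates `0,…,d-1` of `Fin d`; the index `s : Fin (d-1)`
stands for the variable `x_{s+2}` and `j : Fin (n-1)` for the degree weight `j+2`. -/
noncomputable def Lpoly (d n : ℕ) (hd : 1 ≤ d) (a : ℕ → ℕ → ℝ) (k : ℕ) :
    MvPolynomial (Fin d) ℝ :=
  ∑ g1 ∈ Finset.range (k + 1),
    ∑ g ∈ (Finset.Icc (0 : Fin (d - 1) → Fin (n - 1) → ℕ) fun _ _ => k).filter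
        (fun g => g1 + ∑ s, ∑ j, (j.val + 2) * g s j = k),
      MvPolynomial.C ((1 / (g1.factorial : ℝ)) *
          ∏ s, ∏ j, a (j.val + 2) (s.val + 2) ^ g s j / ((g s j).factorial : ℝ)) *
        MvPolynomial.X (⟨0, hd⟩ : Fin d) ^ g1 *
        ∏ s : Fin (d - 1),
          MvPolynomial.X (⟨s.val + 1, by have := s.isLt; omega⟩ : Fin d) ^ (∑ j, g s j)

open MvPolynomial Finset

namespace LpolyAux

/-- weight of an exponent matrix -/
def wgt (d n : ℕ) (g : Fin (d-1) → Fin (n-1) → ℕ) : ℕ := ∑ s, ∑ j, (j.val + 2) * g s j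

/-- the coefficient -/
noncomputable def coefc (d n : ℕ) (a : ℕ → ℕ → ℝ) (g1 : ℕ)
    (g : Fin (d-1) → Fin (n-1) → ℕ) : ℝ :=
  (1 / (g1.factorial : ℝ)) *
    ∏ s, ∏ j, a (j.val + 2) (s.val + 2) ^ g s j / ((g s j).factorial : ℝ)

/-- the index set -/
def Sset (d n k : ℕ) : Finset (ℕ × (Fin (d-1) → Fin (n-1) → ℕ)) :=
  ((Finset.range (k+1)) ×ˢ (Finset.Icc 0 fun _ _ => k)).filter
    (fun p => p.1 + wgt d n p.2 = k)

lemma le_wgt {d n : ℕ} (g : Fin (d-1) → Fin (n-1) → ℕ) (s : Fin (d-1)) (j : Fin (n-1)) :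
    (j.val + 2) * g s j ≤ wgt d n g := by
  unfold wgt
  calc (j.val + 2) * g s j ≤ ∑ j', (j'.val + 2) * g s j' :=
        Finset.single_le_sum (f := fun j' => (j'.val + 2) * g s j')
          (fun _ _ => Nat.zero_le _) (mem_univ j)
    _ ≤ _ := Finset.single_le_sum (f := fun s' => ∑ j', (j'.val + 2) * g s' j')
        (fun _ _ => Nat.zero_le _) (mem_univ s)

lemma mem_Sset {d n k : ℕ} {p : ℕ × (Fin (d-1) → Fin (n-1) → ℕ)} :
    p ∈ Sset d n k ↔ p.1 + wgt d n p.2 = k := by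
  constructor
  · exact fun h => (Finset.mem_filter.mp h).2
  · intro h
    refine Finset.mem_filter.mpr ⟨Finset.mem_product.mpr ⟨?_, ?_⟩, h⟩
    · simp only [Finset.mem_range]; omega
    · refine Finset.mem_Icc.mpr ⟨fun _ _ => Nat.zero_le _, fun s j => ?_⟩
      have h1 := le_wgt p.2 s j
      show p.2 s j ≤ k
      calc p.2 s j ≤ (j.val + 2) * p.2 s j := Nat.le_mul_of_pos_left _ (by omega)
        _ ≤ k := by omega

/-- the exponent Finsupp -/
noncomputable def Mexp (d : ℕ) (hd : 1 ≤ d) (g1 : ℕ) (e : Fin (d-1) → ℕ) : Fin d →₀ ℕ :=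
  Finsupp.single ⟨0, hd⟩ g1 +
    ∑ t : Fin (d-1), Finsupp.single (⟨t.val+1, by have := t.isLt; omega⟩ : Fin d) (e t)

lemma Mexp_apply {d : ℕ} (hd : 1 ≤ d) (g1 : ℕ) (e : Fin (d-1) → ℕ) (x : Fin d) :
    Mexp d hd g1 e x =
      if h : x.val = 0 then g1 else e ⟨x.val - 1, by have := x.isLt; omega⟩ := by
  classical
  rw [Mexp, Finsupp.add_apply, Finsupp.finset_sum_apply]
  by_cases h : x.val = 0
  · rw [dif_pos h]
    have h1 : (⟨0, hd⟩ : Fin d) = x := by ext; simp; omega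
    rw [h1, Finsupp.single_eq_same]
    have h2 : ∀ t : Fin (d-1),
        Finsupp.single (⟨t.val+1, by have := t.isLt; omega⟩ : Fin d) (e t) x = 0 := by
      intro t
      apply Finsupp.single_eq_of_ne
      intro hc
      have := congrArg Fin.val hc
      simp at this; omega
    rw [Finset.sum_congr rfl fun t _ => h2 t]
    simp
  · rw [dif_neg h]
    have h1 : Finsupp.single (⟨0, hd⟩ : Fin d) g1 x = 0 := by
      apply Finsupp.single_eq_of_ne
      intro hc
      have := congrArg Fin.val hc
      simp at this; omega
    rw [h1, zero_add]
    rw [Finset.sum_eq_single (⟨x.val - 1, by have := x.isLt; omega⟩ : Fin (d-1))]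
    · rw [Finsupp.single_apply, if_pos]
      ext; simp; omega
    · intro t _ ht
      apply Finsupp.single_eq_of_ne
      intro hc
      apply ht
      have := congrArg Fin.val hc
      simp at this
      ext; simp; omega
    · intro hc
      exact absurd (mem_univ _) hc

lemma term_eq_monomial {d : ℕ} (hd : 1 ≤ d) (c : ℝ) (g1 : ℕ) {m : ℕ} (e : Fin m → ℕ)
    (f : Fin m → Fin d) :
    (C c * X (⟨0, hd⟩ : Fin d) ^ g1 * ∏ t : Fin m, X (f t) ^ e t : MvPolynomial (Fin d) ℝ)
      = monomial (Finsupp.single ⟨0, hd⟩ g1 + ∑ t : Fin m, Finsupp.single (f t) (e t)) c := by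
  classical
  have key : ∀ S : Finset (Fin m),
      (∏ t ∈ S, X (f t) ^ e t : MvPolynomial (Fin d) ℝ)
        = monomial (∑ t ∈ S, Finsupp.single (f t) (e t)) 1 := by
    intro S
    induction S using Finset.induction with
    | empty => simp [monomial_zero']
    | insert _ _ hx ih =>
      rw [Finset.prod_insert hx, Finset.sum_insert hx, ih, X_pow_eq_monomial,
        monomial_mul, one_mul]
  rw [key, C_mul_X_pow_eq_monomial, monomial_mul, mul_one]

lemma Lpoly_eq (d n : ℕ) (hd : 1 ≤ d) (a : ℕ → ℕ → ℝ) (k : ℕ) :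
    Lpoly d n hd a k = ∑ p ∈ Sset d n k,
      monomial (Mexp d hd p.1 fun t => ∑ j, p.2 t j) (coefc d n a p.1 p.2) := by
  rw [Lpoly, Sset, Finset.sum_filter, Finset.sum_product]
  refine Finset.sum_congr rfl fun g1 _ => ?_
  rw [Finset.sum_filter]
  refine Finset.sum_congr rfl fun g _ => ?_
  by_cases hc : g1 + ∑ s, ∑ j, (j.val + 2) * g s j = k
  · rw [if_pos hc, if_pos (show (g1, g).1 + wgt d n (g1, g).2 = k from hc),
      term_eq_monomial hd]
    rfl
  · rw [if_neg hc, if_neg (show ¬((g1, g).1 + wgt d n (g1, g).2 = k) from hc)]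


/-- change an exponent matrix at one entry -/
def update2 {d n : ℕ} (g : Fin (d-1) → Fin (n-1) → ℕ) (s0 : Fin (d-1)) (j : Fin (n-1))
    (v : ℕ) : Fin (d-1) → Fin (n-1) → ℕ :=
  fun s' j' => if s' = s0 ∧ j' = j then v else g s' j'

lemma update2_same {d n : ℕ} (g : Fin (d-1) → Fin (n-1) → ℕ) (s0 : Fin (d-1))
    (j : Fin (n-1)) (v : ℕ) : update2 g s0 j v s0 j = v := by
  simp [update2]

lemma update2_ne {d n : ℕ} (g : Fin (d-1) → Fin (n-1) → ℕ) (s0 : Fin (d-1)) (j : Fin (n-1))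
    (v : ℕ) {s' : Fin (d-1)} {j' : Fin (n-1)} (h : ¬(s' = s0 ∧ j' = j)) :
    update2 g s0 j v s' j' = g s' j' := by
  simp only [update2, if_neg h]

lemma update2_update2 {d n : ℕ} (g : Fin (d-1) → Fin (n-1) → ℕ) (s0 : Fin (d-1))
    (j : Fin (n-1)) (v w : ℕ) :
    update2 (update2 g s0 j v) s0 j w = update2 g s0 j w := by
  funext s' j'
  by_cases h : s' = s0 ∧ j' = j
  · simp [update2, h]
  · simp [update2, h]

lemma update2_self {d n : ℕ} (g : Fin (d-1) → Fin (n-1) → ℕ) (s0 : Fin (d-1))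
    (j : Fin (n-1)) : update2 g s0 j (g s0 j) = g := by
  funext s' j'
  by_cases h : s' = s0 ∧ j' = j
  · obtain ⟨h1, h2⟩ := h; subst h1; subst h2; simp [update2]
  · simp [update2, h]

lemma wgt_update2 {d n : ℕ} (g : Fin (d-1) → Fin (n-1) → ℕ) (s0 : Fin (d-1)) (j : Fin (n-1))
    (v : ℕ) :
    wgt d n (update2 g s0 j v) + (j.val + 2) * g s0 j = wgt d n g + (j.val + 2) * v := by
  classical
  unfold wgt
  rw [← Finset.add_sum_erase _ (fun s' => ∑ j', (j'.val + 2) * update2 g s0 j v s' j')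
        (mem_univ s0),
      ← Finset.add_sum_erase _ (fun s' => ∑ j', (j'.val + 2) * g s' j') (mem_univ s0),
      ← Finset.add_sum_erase _ (fun j' => (j'.val + 2) * update2 g s0 j v s0 j') (mem_univ j),
      ← Finset.add_sum_erase _ (fun j' => (j'.val + 2) * g s0 j') (mem_univ j)]
  have e1 : ∑ s' ∈ univ.erase s0, ∑ j', (j'.val + 2) * update2 g s0 j v s' j'
      = ∑ s' ∈ univ.erase s0, ∑ j', (j'.val + 2) * g s' j' := by
    refine Finset.sum_congr rfl fun s' hs' => Finset.sum_congr rfl fun j' _ => ?_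
    rw [update2_ne]
    intro hc
    exact (Finset.mem_erase.mp hs').1 hc.1
  have e2 : ∑ j' ∈ univ.erase j, (j'.val + 2) * update2 g s0 j v s0 j'
      = ∑ j' ∈ univ.erase j, (j'.val + 2) * g s0 j' := by
    refine Finset.sum_congr rfl fun j' hj' => ?_
    rw [update2_ne]
    intro hc
    exact (Finset.mem_erase.mp hj').1 hc.2
  rw [e1, e2, update2_same]
  ring

lemma rowsum_update2_same {d n : ℕ} (g : Fin (d-1) → Fin (n-1) → ℕ) (s0 : Fin (d-1))
    (j : Fin (n-1)) (v : ℕ) :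
    (∑ j', update2 g s0 j v s0 j') + g s0 j = (∑ j', g s0 j') + v := by
  classical
  rw [← Finset.add_sum_erase _ (fun j' => update2 g s0 j v s0 j') (mem_univ j),
      ← Finset.add_sum_erase _ (fun j' => g s0 j') (mem_univ j)]
  have e2 : ∑ j' ∈ univ.erase j, update2 g s0 j v s0 j' = ∑ j' ∈ univ.erase j, g s0 j' := by
    refine Finset.sum_congr rfl fun j' hj' => ?_
    rw [update2_ne]
    intro hc
    exact (Finset.mem_erase.mp hj').1 hc.2
  rw [e2, update2_same]
  ring

lemma rowsum_update2_ne {d n : ℕ} (g : Fin (d-1) → Fin (n-1) → ℕ) (s0 : Fin (d-1))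
    (j : Fin (n-1)) (v : ℕ) {t : Fin (d-1)} (h : t ≠ s0) :
    ∑ j', update2 g s0 j v t j' = ∑ j', g t j' := by
  refine Finset.sum_congr rfl fun j' _ => ?_
  rw [update2_ne]
  intro hc
  exact h hc.1

lemma coefc_succ (d n : ℕ) (a : ℕ → ℕ → ℝ) (m : ℕ) (g : Fin (d-1) → Fin (n-1) → ℕ) :
    coefc d n a (m+1) g * ((m : ℝ) + 1) = coefc d n a m g := by
  unfold coefc
  rw [Nat.factorial_succ]
  have h1 : ((m.factorial : ℝ)) ≠ 0 := Nat.cast_ne_zero.mpr m.factorial_ne_zero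
  push_cast
  field_simp

lemma coefc_step (d n : ℕ) (a : ℕ → ℕ → ℝ) (g1 : ℕ) (g : Fin (d-1) → Fin (n-1) → ℕ)
    (s0 : Fin (d-1)) (j : Fin (n-1)) (h : g s0 j ≠ 0) :
    coefc d n a g1 g * (g s0 j : ℝ)
      = a (j.val + 2) (s0.val + 2) * coefc d n a g1 (update2 g s0 j (g s0 j - 1)) := by
  classical
  obtain ⟨m, hm⟩ : ∃ m, g s0 j = m + 1 := ⟨g s0 j - 1, by omega⟩
  set g' := update2 g s0 j (g s0 j - 1) with hg'
  set F : (Fin (d-1) → Fin (n-1) → ℕ) → Fin (d-1) → Fin (n-1) → ℝ :=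
    fun G s' j' => a (j'.val + 2) (s'.val + 2) ^ G s' j' / ((G s' j').factorial : ℝ) with hF
  have split : ∀ G : Fin (d-1) → Fin (n-1) → ℕ,
      (∏ s', ∏ j', F G s' j')
        = F G s0 j * ((∏ j' ∈ univ.erase j, F G s0 j') *
            ∏ s' ∈ univ.erase s0, ∏ j', F G s' j') := by
    intro G
    rw [← Finset.mul_prod_erase univ (fun s' => ∏ j', F G s' j') (mem_univ s0),
        ← Finset.mul_prod_erase univ (fun j' => F G s0 j') (mem_univ j), mul_assoc]
  have e1 : ∏ j' ∈ univ.erase j, F g' s0 j' = ∏ j' ∈ univ.erase j, F g s0 j' := by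
    refine Finset.prod_congr rfl fun j' hj' => ?_
    have hv : g' s0 j' = g s0 j' :=
      update2_ne _ _ _ _ (fun hc => (Finset.mem_erase.mp hj').1 hc.2)
    simp only [hF, hv]
  have e2 : ∏ s' ∈ univ.erase s0, ∏ j', F g' s' j'
      = ∏ s' ∈ univ.erase s0, ∏ j', F g s' j' := by
    refine Finset.prod_congr rfl fun s' hs' => Finset.prod_congr rfl fun j' _ => ?_
    have hv : g' s' j' = g s' j' :=
      update2_ne _ _ _ _ (fun hc => (Finset.mem_erase.mp hs').1 hc.1)
    simp only [hF, hv]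
  have e3 : g' s0 j = m := by rw [hg', update2_same]; omega
  have key : F g s0 j * (g s0 j : ℝ) = a (j.val + 2) (s0.val + 2) * F g' s0 j := by
    simp only [hF]
    rw [e3, hm]
    have h1 : ((m.factorial : ℝ)) ≠ 0 := Nat.cast_ne_zero.mpr m.factorial_ne_zero
    rw [Nat.factorial_succ, pow_succ]
    push_cast
    field_simp
  show (1 / (g1.factorial : ℝ)) * (∏ s', ∏ j', F g s' j') * (g s0 j : ℝ)
      = a (j.val + 2) (s0.val + 2) * ((1 / (g1.factorial : ℝ)) * ∏ s', ∏ j', F g' s' j')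
  rw [split g, split g', e1, e2]
  calc 1 / (g1.factorial : ℝ) *
        (F g s0 j * ((∏ j' ∈ univ.erase j, F g s0 j') * ∏ s' ∈ univ.erase s0, ∏ j', F g s' j'))
          * (g s0 j : ℝ)
      = (F g s0 j * (g s0 j : ℝ)) * (1 / (g1.factorial : ℝ) *
          ((∏ j' ∈ univ.erase j, F g s0 j') * ∏ s' ∈ univ.erase s0, ∏ j', F g s' j')) := by
        ring
    _ = _ := by rw [key]; ring

lemma Mexp_sub_zero {d : ℕ} (hd : 1 ≤ d) (g1 : ℕ) (e : Fin (d-1) → ℕ) (x0 : Fin d)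
    (hx : x0.val = 0) :
    Mexp d hd g1 e - Finsupp.single x0 1 = Mexp d hd (g1 - 1) e := by
  ext x
  rw [Finsupp.tsub_apply, Mexp_apply, Mexp_apply, Finsupp.single_apply]
  by_cases h0 : x.val = 0
  · rw [dif_pos h0, dif_pos h0, if_pos (Fin.ext (by omega))]
  · rw [dif_neg h0, dif_neg h0, if_neg (fun hc => h0 (by rw [← hc, hx])), Nat.sub_zero]

lemma Mexp_sub_succ {d : ℕ} (hd : 1 ≤ d) (g1 : ℕ) (e e' : Fin (d-1) → ℕ) (s : Fin d)
    (s0 : Fin (d-1)) (hs : s.val = s0.val + 1) (he : e' s0 = e s0 - 1)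
    (he' : ∀ t, t ≠ s0 → e' t = e t) :
    Mexp d hd g1 e - Finsupp.single s 1 = Mexp d hd g1 e' := by
  ext x
  rw [Finsupp.tsub_apply, Mexp_apply, Mexp_apply, Finsupp.single_apply]
  by_cases h0 : x.val = 0
  · rw [dif_pos h0, dif_pos h0, if_neg (fun hc => by rw [← hc] at h0; omega), Nat.sub_zero]
  · rw [dif_neg h0, dif_neg h0]
    by_cases ht : s = x
    · rw [if_pos ht]
      have hx0 : (⟨x.val - 1, by have := x.isLt; omega⟩ : Fin (d-1)) = s0 := by
        ext; simp; omega
      rw [hx0, he]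
    · rw [if_neg ht, Nat.sub_zero]
      apply (he' _ ?_).symm
      intro hc
      apply ht
      ext
      have := congrArg Fin.val hc
      simp at this
      omega

end LpolyAux

theorem Lpoly_pderiv_recursions
    (d n : ℕ) (hd : 2 ≤ d) (hn : 1 ≤ n) (a : ℕ → ℕ → ℝ) :
    (∀ k : ℕ, 1 ≤ k → k ≤ n →
      MvPolynomial.pderiv (⟨0, by omega⟩ : Fin d) (Lpoly d n (by omega) a k)
        = Lpoly d n (by omega) a (k - 1)) ∧
    (∀ s : Fin d, 1 ≤ s.val → ∀ k : ℕ, k ≤ n →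
      MvPolynomial.pderiv s (Lpoly d n (by omega) a k)
        = ∑ i ∈ Finset.Icc 2 k, a i (s.val + 1) • Lpoly d n (by omega) a (k - i)) := by
  classical
  have hd1 : 1 ≤ d := by omega
  constructor
  · intro k hk1 hkn
    rw [LpolyAux.Lpoly_eq, LpolyAux.Lpoly_eq, map_sum]
    have step : ∀ p : ℕ × (Fin (d-1) → Fin (n-1) → ℕ),
        MvPolynomial.pderiv (⟨0, by omega⟩ : Fin d)
          (monomial (LpolyAux.Mexp d hd1 p.1 fun t => ∑ j, p.2 t j)
            (LpolyAux.coefc d n a p.1 p.2))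
        = monomial
            (LpolyAux.Mexp d hd1 p.1 (fun t => ∑ j, p.2 t j)
              - Finsupp.single (⟨0, by omega⟩ : Fin d) 1)
            (LpolyAux.coefc d n a p.1 p.2 * (p.1 : ℝ)) := by
      intro p
      rw [MvPolynomial.pderiv_monomial, LpolyAux.Mexp_apply,
        dif_pos (show ((⟨0, by omega⟩ : Fin d)).val = 0 from rfl)]
    rw [Finset.sum_congr rfl fun p _ => step p]
    rw [← Finset.sum_filter_of_ne (p := fun p => p.1 ≠ 0)
      (fun x _ hx => fun h0 => hx (by rw [h0]; simp))]
    refine Finset.sum_bij' (fun p _ => (p.1 - 1, p.2)) (fun q _ => (q.1 + 1, q.2))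
      ?_ ?_ ?_ ?_ ?_
    · intro p hp
      obtain ⟨hp1, hp2⟩ := Finset.mem_filter.mp hp
      have h1 := LpolyAux.mem_Sset.mp hp1
      simp only [ne_eq] at hp2
      exact LpolyAux.mem_Sset.mpr (by simp only; omega)
    · intro q hq
      have h1 := LpolyAux.mem_Sset.mp hq
      refine Finset.mem_filter.mpr ⟨LpolyAux.mem_Sset.mpr (by simp only; omega), by simp⟩
    · intro p hp
      obtain ⟨hp1, hp2⟩ := Finset.mem_filter.mp hp
      simp only [ne_eq] at hp2
      exact Prod.ext (by simp; omega) rfl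
    · intro q hq
      exact Prod.ext (by simp) rfl
    · rintro ⟨g1, g⟩ hp
      obtain ⟨hp1, hp2⟩ := Finset.mem_filter.mp hp
      simp only [ne_eq] at hp2
      obtain ⟨m, rfl⟩ : ∃ m, g1 = m + 1 := ⟨g1 - 1, by omega⟩
      rw [LpolyAux.Mexp_sub_zero hd1 _ _ _ rfl]
      simp only [Nat.add_sub_cancel]
      congr 1
      rw [show (((m+1 : ℕ)) : ℝ) = (m : ℝ) + 1 by push_cast; ring]
      exact LpolyAux.coefc_succ d n a m g
  · intro s hs k hkn
    have hs0lt : s.val - 1 < d - 1 := by have := s.isLt; omega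
    set s0 : Fin (d-1) := ⟨s.val - 1, hs0lt⟩ with hs0
    have hsv0 : s0.val = s.val - 1 := rfl
    have hsval : s.val = s0.val + 1 := by omega
    -- rewrite LHS
    rw [LpolyAux.Lpoly_eq, map_sum]
    have step : ∀ p : ℕ × (Fin (d-1) → Fin (n-1) → ℕ),
        MvPolynomial.pderiv s
          (monomial (LpolyAux.Mexp d hd1 p.1 fun t => ∑ j, p.2 t j)
            (LpolyAux.coefc d n a p.1 p.2))
        = ∑ j : Fin (n-1), monomial
            (LpolyAux.Mexp d hd1 p.1 (fun t => ∑ j', p.2 t j') - Finsupp.single s 1)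
            (LpolyAux.coefc d n a p.1 p.2 * (p.2 s0 j : ℝ)) := by
      intro p
      rw [MvPolynomial.pderiv_monomial, LpolyAux.Mexp_apply, dif_neg (by omega)]
      have hmk : (⟨s.val - 1, by have := s.isLt; omega⟩ : Fin (d-1)) = s0 := rfl
      rw [hmk, Nat.cast_sum, Finset.mul_sum, map_sum]
    rw [Finset.sum_congr rfl fun p _ => step p, Finset.sum_sigma']
    rw [← Finset.sum_filter_of_ne (p := fun x => x.1.2 s0 x.2 ≠ 0)
      (fun x _ hx => fun h0 => hx (by rw [h0]; simp))]
    -- rewrite RHS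
    have rhs : ∀ i : ℕ, a i (s.val + 1) • Lpoly d n hd1 a (k - i)
        = ∑ q ∈ LpolyAux.Sset d n (k - i),
            monomial (LpolyAux.Mexp d hd1 q.1 fun t => ∑ j, q.2 t j)
              (a i (s.val + 1) * LpolyAux.coefc d n a q.1 q.2) := by
      intro i
      rw [LpolyAux.Lpoly_eq, Finset.smul_sum]
      exact Finset.sum_congr rfl fun q _ => by rw [smul_monomial, smul_eq_mul]
    rw [Finset.sum_congr rfl fun i _ => rhs i, Finset.sum_sigma']
    -- the bijection
    refine Finset.sum_bij
      (fun x _ => ⟨x.2.val + 2, (x.1.1, LpolyAux.update2 x.1.2 s0 x.2 (x.1.2 s0 x.2 - 1))⟩)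
      ?_ ?_ ?_ ?_
    · rintro ⟨⟨g1, g⟩, j⟩ hx
      dsimp only
      obtain ⟨hx1, hx2⟩ := Finset.mem_filter.mp hx
      have h1 := LpolyAux.mem_Sset.mp (Finset.mem_sigma.mp hx1).1
      simp only [ne_eq] at hx2 h1
      obtain ⟨m, hm⟩ : ∃ m, g s0 j = m + 1 := ⟨g s0 j - 1, by omega⟩
      have hle := LpolyAux.le_wgt g s0 j
      have hw := LpolyAux.wgt_update2 g s0 j (g s0 j - 1)
      have hmul1 : (j.val + 2) * g s0 j = (j.val + 2) * m + (j.val + 2) := by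
        rw [hm, Nat.mul_succ]
      have hmul2 : (j.val + 2) * (g s0 j - 1) = (j.val + 2) * m := by
        rw [hm, Nat.add_sub_cancel]
      rw [hmul1, hmul2] at hw
      rw [hmul1] at hle
      refine Finset.mem_sigma.mpr ⟨?_, LpolyAux.mem_Sset.mpr ?_⟩
      · show j.val + 2 ∈ Finset.Icc 2 k
        rw [Finset.mem_Icc]
        omega
      · show g1 + LpolyAux.wgt d n (LpolyAux.update2 g s0 j (g s0 j - 1)) = k - (j.val + 2)
        omega
    · rintro ⟨⟨g1, g⟩, j⟩ hx ⟨⟨g1', g'⟩, j'⟩ hx' heq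
      obtain ⟨-, hx2⟩ := Finset.mem_filter.mp hx
      obtain ⟨-, hx2'⟩ := Finset.mem_filter.mp hx'
      have hg0 : g s0 j ≠ 0 := hx2
      have hg0' : g' s0 j' ≠ 0 := hx2'
      have heq' : (⟨j.val + 2, (g1, LpolyAux.update2 g s0 j (g s0 j - 1))⟩ :
          Σ _ : ℕ, ℕ × (Fin (d-1) → Fin (n-1) → ℕ))
          = ⟨j'.val + 2, (g1', LpolyAux.update2 g' s0 j' (g' s0 j' - 1))⟩ := heq
      obtain ⟨h1, h2⟩ := Sigma.mk.inj_iff.mp heq'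
      have hjj : j = j' := Fin.ext (by omega)
      subst hjj
      have h2' := eq_of_heq h2
      rw [Prod.mk.injEq] at h2'
      obtain ⟨hg1, hgg⟩ := h2'
      have hval : g s0 j = g' s0 j := by
        have e1 := LpolyAux.update2_same g s0 j (g s0 j - 1)
        have e2 := LpolyAux.update2_same g' s0 j (g' s0 j - 1)
        rw [hgg] at e1
        have hn1 : g s0 j ≠ 0 := hg0
        have hn2 : g' s0 j ≠ 0 := hg0'
        omega
      have : g = g' := by
        have k1 : LpolyAux.update2 (LpolyAux.update2 g s0 j (g s0 j - 1)) s0 j (g s0 j) = g := by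
          rw [LpolyAux.update2_update2, LpolyAux.update2_self]
        have k2 : LpolyAux.update2 (LpolyAux.update2 g' s0 j (g' s0 j - 1)) s0 j (g' s0 j)
            = g' := by
          rw [LpolyAux.update2_update2, LpolyAux.update2_self]
        rw [← k1, hgg, hval, k2]
      simp [this, hg1]
    · rintro ⟨i, q1, q⟩ hb
      obtain ⟨hb1, hb2⟩ := Finset.mem_sigma.mp hb
      dsimp only at hb1 hb2
      obtain ⟨hi2, hik⟩ := Finset.mem_Icc.mp hb1
      have hq := LpolyAux.mem_Sset.mp hb2
      dsimp only at hq
      have hjlt : i - 2 < n - 1 := by omega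
      set j : Fin (n-1) := ⟨i - 2, hjlt⟩ with hj
      have hjv : j.val = i - 2 := rfl
      have hji : j.val + 2 = i := by omega
      refine ⟨⟨(q1, LpolyAux.update2 q s0 j (q s0 j + 1)), j⟩, ?_, ?_⟩
      · have hw := LpolyAux.wgt_update2 q s0 j (q s0 j + 1)
        have hmul : (j.val + 2) * (q s0 j + 1) = (j.val + 2) * q s0 j + (j.val + 2) := by
          rw [Nat.mul_succ]
        rw [hmul] at hw
        refine Finset.mem_filter.mpr ⟨Finset.mem_sigma.mpr
          ⟨LpolyAux.mem_Sset.mpr ?_, Finset.mem_univ _⟩, ?_⟩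
        · dsimp only
          omega
        · dsimp only
          simp only [ne_eq, LpolyAux.update2_same]
          omega
      · dsimp only
        refine Sigma.ext hji (heq_of_eq ?_)
        refine Prod.ext rfl ?_
        dsimp only
        rw [LpolyAux.update2_same, Nat.add_sub_cancel, LpolyAux.update2_update2,
          LpolyAux.update2_self]
    · rintro ⟨⟨g1, g⟩, j⟩ hx
      obtain ⟨hx1, hx2⟩ := Finset.mem_filter.mp hx
      simp only [ne_eq] at hx2
      dsimp only
      have he : (∑ j', LpolyAux.update2 g s0 j (g s0 j - 1) s0 j')
          = (∑ j', g s0 j') - 1 := by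
        have h1 := LpolyAux.rowsum_update2_same g s0 j (g s0 j - 1)
        have h2 : g s0 j ≤ ∑ j', g s0 j' :=
          Finset.single_le_sum (f := fun j' => g s0 j') (fun _ _ => Nat.zero_le _)
            (Finset.mem_univ j)
        omega
      rw [LpolyAux.Mexp_sub_succ hd1 g1 (fun t => ∑ j', g t j')
        (fun t => ∑ j', LpolyAux.update2 g s0 j (g s0 j - 1) t j') s s0 hsval he
        (fun t ht => LpolyAux.rowsum_update2_ne g s0 j _ ht)]
      congr 1
      rw [show s.val + 1 = s0.val + 2 by omega]
      exact LpolyAux.coefc_step d n a g1 g s0 j hx2
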